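/- Let j ≥ 1 be an integer, k₀ = 300000, R = 400000, r = 2·k₀·R³·10^{j+8} and N = R⁶·k₀⁵·10^{2j+20}. Let B and B′ be finite sets of integers with |B| ≤ k₀ and |B′| ≤ k₀, and let a : B → ℤ and b : B′ → ℤ be arbitrary functions. For h ∈ ℤ set P_h = {(x, a(x)+h−1) : x ∈ B} ∪ {(b(y)−h+1, y) : y ∈ B′} ⊆ ℤ². Then for every finite set T ⊆ ℤ with |T| = N and every set S ⊆ ℤ² with |S| = k₀, there exists h₀ ∈ T such that for every p ∈ P_{h₀} and every s ∈ S one has ‖p − s‖_∞ ≥ r. -/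

import Mathlib

/-- **Existence of an admissible assignment avoiding a forbidden set.** With
`k₀ = 300000`, `R = 400000`, `r = 2 k₀ R³ 10^(j+8)` and `N = R⁶ k₀⁵ 10^(2j+20)`:
given `B, B'` of size at most `k₀`, functions `a : B → ℤ`, `b : B' → ℤ` encoding the
family of shifted assignments `τ_h(x) = a(x) + h - 1`, `τ_h⁻¹(y) = b(y) - h + 1`,
any set `T` of `N` candidate shifts, and any forbidden set `S` of `k₀` sites, some
shift `h₀ ∈ T` keeps all assigned points at `‖·‖_∞`-distance at least `r` from `S`. -/
theorem admissible_assignment_avoiding_forbidden_set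
    (j k₀ R : ℕ) (hj : 1 ≤ j) (hk₀ : k₀ = 300000) (hR : R = 400000)
    (B B' : Finset ℤ) (hB : B.card ≤ k₀) (hB' : B'.card ≤ k₀)
    (a b : ℤ → ℤ)
    (T : Finset ℤ) (hT : T.card = R ^ 6 * k₀ ^ 5 * 10 ^ (2 * j + 20))
    (S : Finset (ℤ × ℤ)) (hS : S.card = k₀) :
    ∃ h₀ ∈ T, ∀ p : ℤ × ℤ,
      p ∈ ((fun x => (x, a x + h₀ - 1)) '' (B : Set ℤ) ∪
           (fun y => (b y - h₀ + 1, y)) '' (B' : Set ℤ)) →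
      ∀ s ∈ S, ((2 * k₀ * R ^ 3 * 10 ^ (j + 8) : ℕ) : ℤ) ≤ max |p.1 - s.1| |p.2 - s.2| := by
  subst hk₀ hR
  set r : ℕ := 2 * 300000 * 400000 ^ 3 * 10 ^ (j + 8) with hrdef
  -- the set of bad shifts
  set Bad : Finset ℤ :=
    ((B ×ˢ S).biUnion fun q => Finset.Ioo (q.2.2 - a q.1 + 1 - (r : ℤ)) (q.2.2 - a q.1 + 1 + r)) ∪
    ((B' ×ˢ S).biUnion fun q => Finset.Ioo (b q.1 + 1 - q.2.1 - (r : ℤ)) (b q.1 + 1 - q.2.1 + r))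
    with hBadDef
  have hIoo : ∀ c : ℤ, (Finset.Ioo (c - (r : ℤ)) (c + r)).card ≤ 2 * r := by
    intro c
    rw [Int.card_Ioo]
    omega
  have c1 : ((B ×ˢ S).biUnion fun q =>
      Finset.Ioo (q.2.2 - a q.1 + 1 - (r : ℤ)) (q.2.2 - a q.1 + 1 + r)).card
      ≤ (B ×ˢ S).card * (2 * r) := by
    calc _ ≤ ∑ q ∈ B ×ˢ S, (Finset.Ioo (q.2.2 - a q.1 + 1 - (r : ℤ))
          (q.2.2 - a q.1 + 1 + r)).card := Finset.card_biUnion_le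
      _ ≤ ∑ _q ∈ B ×ˢ S, 2 * r := Finset.sum_le_sum fun q _ => hIoo _
      _ = (B ×ˢ S).card * (2 * r) := by rw [Finset.sum_const, smul_eq_mul]
  have c2 : ((B' ×ˢ S).biUnion fun q =>
      Finset.Ioo (b q.1 + 1 - q.2.1 - (r : ℤ)) (b q.1 + 1 - q.2.1 + r)).card
      ≤ (B' ×ˢ S).card * (2 * r) := by
    calc _ ≤ ∑ q ∈ B' ×ˢ S, (Finset.Ioo (b q.1 + 1 - q.2.1 - (r : ℤ))
          (b q.1 + 1 - q.2.1 + r)).card := Finset.card_biUnion_le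
      _ ≤ ∑ _q ∈ B' ×ˢ S, 2 * r := Finset.sum_le_sum fun q _ => hIoo _
      _ = (B' ×ˢ S).card * (2 * r) := by rw [Finset.sum_const, smul_eq_mul]
  have hprod1 : (B ×ˢ S).card ≤ 300000 * 300000 := by
    rw [Finset.card_product, hS]; exact Nat.mul_le_mul_right _ hB
  have hprod2 : (B' ×ˢ S).card ≤ 300000 * 300000 := by
    rw [Finset.card_product, hS]; exact Nat.mul_le_mul_right _ hB'
  have hBadCard : Bad.card ≤ 2 * (300000 * 300000 * (2 * r)) :=
    calc Bad.card ≤ _ + _ := Finset.card_union_le _ _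
      _ ≤ (B ×ˢ S).card * (2 * r) + (B' ×ˢ S).card * (2 * r) := Nat.add_le_add c1 c2
      _ ≤ 300000 * 300000 * (2 * r) + 300000 * 300000 * (2 * r) :=
          Nat.add_le_add (Nat.mul_le_mul_right _ hprod1) (Nat.mul_le_mul_right _ hprod2)
      _ = 2 * (300000 * 300000 * (2 * r)) := by ring
  have hApos : 0 < 10 ^ (j + 8) := Nat.pow_pos (by norm_num)
  have hexp : (10 : ℕ) ^ (2 * j + 20) = 10 ^ (j + 8) * 10 ^ (j + 12) := by
    rw [← pow_add]; congr 1; ring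
  have hlt : Bad.card < T.card := by
    refine lt_of_le_of_lt hBadCard ?_
    rw [hT, hexp, hrdef]
    have step1 : (8 * 300000 ^ 3 * 400000 ^ 3 : ℕ) < 400000 ^ 6 * 300000 ^ 5 := by norm_num
    calc 2 * (300000 * 300000 * (2 * (2 * 300000 * 400000 ^ 3 * 10 ^ (j + 8))))
        = (8 * 300000 ^ 3 * 400000 ^ 3) * 10 ^ (j + 8) := by ring
      _ < (400000 ^ 6 * 300000 ^ 5) * 10 ^ (j + 8) :=
          (Nat.mul_lt_mul_right hApos).mpr step1
      _ ≤ 400000 ^ 6 * 300000 ^ 5 * (10 ^ (j + 8) * 10 ^ (j + 12)) := by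
          rw [← mul_assoc]
          exact Nat.le_mul_of_pos_right _ (by positivity)
  obtain ⟨h₀, hh₀T, hh₀Bad⟩ : ∃ h₀ ∈ T, h₀ ∉ Bad := by
    by_contra hcon
    push_neg at hcon
    exact absurd (Finset.card_le_card fun z hz => hcon z hz) (not_le.mpr hlt)
  refine ⟨h₀, hh₀T, ?_⟩
  rintro p hp s hsS
  by_contra hle
  push_neg at hle
  have h1 : |p.1 - s.1| < (r : ℤ) := lt_of_le_of_lt (le_max_left _ _) hle
  have h2 : |p.2 - s.2| < (r : ℤ) := lt_of_le_of_lt (le_max_right _ _) hle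
  rw [abs_lt] at h1 h2
  apply hh₀Bad
  rw [hBadDef, Finset.mem_union]
  rcases hp with ⟨x, hx, rfl⟩ | ⟨y, hy, rfl⟩
  · left
    refine Finset.mem_biUnion.mpr ⟨(x, s), Finset.mem_product.mpr ⟨hx, hsS⟩, ?_⟩
    simp only [Finset.mem_Ioo]
    constructor <;> simp at h2 ⊢ <;> omega
  · right
    refine Finset.mem_biUnion.mpr ⟨(y, s), Finset.mem_product.mpr ⟨hy, hsS⟩, ?_⟩
    simp only [Finset.mem_Ioo]
    constructor <;> simp at h1 ⊢ <;> omega
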